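/- Let F and G be nonempty finite sets of affine functions from ℝ to ℝ, and let H = { f ∘ g : f ∈ F, g ∈ G }. Then the upper envelope H_↑ is piecewise linear with p(H_↑) ≤ 4·p(F_↑) + 2·p(G_↓) + 2·p(G_↑) pieces, where G_↓ is the pointwise minimum over G and F_↑, G_↑ are the pointwise maxima over F, G. -/

import Mathlib

/-- `f : ℝ → ℝ` is piecewise linear with at most `k` pieces: there are
breakpoints `c 0 ≤ c 1 ≤ … ≤ c (k-2)` such that on each of the `k` intervals
`(-∞, c 0], [c 0, c 1], …, [c (k-2), ∞)` the function `f` agrees with some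
affine function `x ↦ a * x + b`. -/
def PiecewiseAffineWith (f : ℝ → ℝ) (k : ℕ) : Prop :=
  0 < k ∧ ∃ c : Fin (k - 1) → ℝ, Monotone c ∧
    ∀ j : Fin k, ∃ a b : ℝ, ∀ y : ℝ,
      (∀ i : Fin (k - 1), (i : ℕ) < (j : ℕ) → c i ≤ y) →
      (∀ i : Fin (k - 1), (j : ℕ) ≤ (i : ℕ) → y ≤ c i) →
      f y = a * y + b

/-- `p(f)`: the least `k` such that `f` is piecewise linear with at most `k` pieces. -/
noncomputable def nPieces (f : ℝ → ℝ) : ℕ := sInf {k | PiecewiseAffineWith f k}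


section PWHelpers
open Finset Set

/-- Two affine functions agreeing at two points have equal coefficients. -/
lemma affine_eq_coeff {a b a' b' p q : ℝ} (hpq : p ≠ q)
    (h1 : a*p+b = a'*p+b') (h2 : a*q+b = a'*q+b') : a = a' ∧ b = b' := by
  have hp : (a - a') * p = (b' - b) := by linarith
  have hq : (a - a') * q = (b' - b) := by linarith
  have h0 : (a - a') * (p - q) = 0 := by linarith [hp, hq]
  have ha : a = a' := by
    rcases mul_eq_zero.1 h0 with h | h
    · linarith
    · exact absurd (by linarith : p = q) hpq
  refine ⟨ha, ?_⟩
  have := h1; rw [ha] at this; linarith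

lemma affine_eq_coeff' {a b a' b' p q : ℝ} (hpq : p < q)
    (h : ∀ y ∈ Set.Icc p q, a*y+b = a'*y+b') : a = a' ∧ b = b' :=
  affine_eq_coeff hpq.ne (h p ⟨le_refl _, hpq.le⟩) (h q ⟨hpq.le, le_refl _⟩)

section lines
variable {ι : Type*}

lemma lineSup_ge (S : Finset ι) (hS : S.Nonempty) (A B : ι → ℝ) {m : ℝ} (hm : ∀ i ∈ S, m ≤ A i) {x y : ℝ} (hxy : x ≤ y) :
    S.sup' hS (fun i => A i * x + B i) + m * (y - x) ≤ S.sup' hS (fun i => A i * y + B i) := by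
  obtain ⟨i, hi, hieq⟩ := Finset.exists_mem_eq_sup' hS (fun i => A i * x + B i)
  have h2 : A i * y + B i ≤ S.sup' hS (fun i => A i * y + B i) :=
    Finset.le_sup' (fun i => A i * y + B i) hi
  rw [hieq]
  nlinarith [hm i hi]

lemma lineSup_le (S : Finset ι) (hS : S.Nonempty) (A B : ι → ℝ) {M : ℝ} (hM : ∀ i ∈ S, A i ≤ M) {x y : ℝ} (hxy : x ≤ y) :
    S.sup' hS (fun i => A i * y + B i) ≤ S.sup' hS (fun i => A i * x + B i) + M * (y - x) := by
  apply Finset.sup'_le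
  intro i hi
  have h1 : A i * x + B i ≤ S.sup' hS (fun i => A i * x + B i) :=
    Finset.le_sup' (fun i => A i * x + B i) hi
  nlinarith [hM i hi]

lemma lineSup_continuous (S : Finset ι) (hS : S.Nonempty) (A B : ι → ℝ) :
    Continuous (fun x => S.sup' hS (fun i => A i * x + B i)) := by
  induction hS using Finset.Nonempty.cons_induction with
  | singleton i => simp only [Finset.sup'_singleton]; exact (continuous_const.mul continuous_id).add continuous_const
  | cons i s his hs ih =>
      have : (fun x => (Finset.cons i s his).sup' (Finset.cons_nonempty his) (fun j => A j * x + B j))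
          = fun x => max (A i * x + B i) (s.sup' hs (fun j => A j * x + B j)) := by
        funext x; rw [Finset.sup'_cons]
      rw [this]
      exact ((continuous_const.mul continuous_id).add continuous_const).max ih

lemma lineSup_convex (S : Finset ι) (hS : S.Nonempty) (A B : ι → ℝ) :
    ConvexOn ℝ Set.univ (fun x => S.sup' hS (fun i => A i * x + B i)) := by
  refine ⟨convex_univ, ?_⟩
  intro x _ y _ p q hp hq hpq
  simp only [smul_eq_mul]
  apply Finset.sup'_le
  intro i hi
  have h1 : A i * x + B i ≤ S.sup' hS (fun i => A i * x + B i) :=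
    Finset.le_sup' (fun i => A i * x + B i) hi
  have h2 : A i * y + B i ≤ S.sup' hS (fun i => A i * y + B i) :=
    Finset.le_sup' (fun i => A i * y + B i) hi
  have key : A i * (p * x + q * y) + B i = p * (A i * x + B i) + q * (A i * y + B i) := by
    have hq1 : q = 1 - p := by linarith
    subst hq1; ring
  rw [key]
  exact add_le_add (by nlinarith) (by nlinarith)
end lines

section envlaux
variable {m : ℕ} (σ β : Fin (m+1) → ℝ)

theorem envl_aux (hσ : StrictMono σ) :
    PiecewiseAffineWith (fun x => (Finset.univ : Finset (Fin (m+1))).sup'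
      Finset.univ_nonempty (fun i => σ i * x + β i)) (m+1) := by
  set E : ℝ → ℝ := fun x => (Finset.univ : Finset (Fin (m+1))).sup'
      Finset.univ_nonempty (fun i => σ i * x + β i) with hE
  -- upper/lower index blocks
  have hUne : ∀ i : Fin m, (Finset.Iic i.castSucc).Nonempty :=
    fun i => ⟨i.castSucc, Finset.mem_Iic.2 le_rfl⟩
  have hVne : ∀ i : Fin m, (Finset.Ioi i.castSucc).Nonempty :=
    fun i => ⟨i.succ, Finset.mem_Ioi.2 (Fin.castSucc_lt_succ (i := i))⟩
  set EU : Fin m → ℝ → ℝ := fun i x => (Finset.Iic i.castSucc).sup' (hUne i) (fun j => σ j * x + β j) with hEU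
  set EV : Fin m → ℝ → ℝ := fun i x => (Finset.Ioi i.castSucc).sup' (hVne i) (fun j => σ j * x + β j) with hEV
  set D : Fin m → ℝ → ℝ := fun i x => EV i x - EU i x with hD
  have hsplit : ∀ (i : Fin m) (x : ℝ), E x = max (EU i x) (EV i x) := by
    intro i x
    have huniv : (Finset.Iic i.castSucc) ∪ (Finset.Ioi i.castSucc) = (Finset.univ : Finset (Fin (m+1))) := by
      ext j; simp [Finset.mem_Iic, Finset.mem_Ioi, le_or_gt]
    have h0 : E x = (Finset.Iic i.castSucc ∪ Finset.Ioi i.castSucc).sup'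
        (huniv ▸ Finset.univ_nonempty) (fun j => σ j * x + β j) :=
      Finset.sup'_congr Finset.univ_nonempty huniv.symm (fun _ _ => rfl)
    rw [h0, Finset.sup'_union (hUne i) (hVne i) (fun j => σ j * x + β j)]
  have hδ : ∀ i : Fin m, 0 < σ i.succ - σ i.castSucc := by
    intro i; have := hσ (Fin.castSucc_lt_succ (i := i)); linarith
  have hDmono : ∀ (i : Fin m) {x y : ℝ}, x ≤ y →
      D i x + (σ i.succ - σ i.castSucc) * (y - x) ≤ D i y := by
    intro i x y hxy
    have h1 : EV i x + σ i.succ * (y - x) ≤ EV i y := by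
      apply lineSup_ge _ _ _ _ _ hxy
      intro j hj
      have : i.castSucc < j := Finset.mem_Ioi.1 hj
      exact hσ.monotone (Fin.castSucc_lt_iff_succ_le.1 this)
    have h2 : EU i y ≤ EU i x + σ i.castSucc * (y - x) := by
      apply lineSup_le _ _ _ _ _ hxy
      intro j hj
      exact hσ.monotone (Finset.mem_Iic.1 hj)
    simp only [hD]; linarith
  have hDcont : ∀ i : Fin m, Continuous (D i) :=
    fun i => (lineSup_continuous _ _ _ _).sub (lineSup_continuous _ _ _ _)
  -- the breakpoints
  have hSne : ∀ i : Fin m, {x : ℝ | 0 ≤ D i x}.Nonempty := by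
    intro i
    set x₀ : ℝ := max 0 (-(D i 0) / (σ i.succ - σ i.castSucc)) with hx₀
    refine ⟨x₀, ?_⟩
    have h1 := hDmono i (show (0:ℝ) ≤ x₀ from le_max_left 0 _)
    have h2 : -(D i 0) / (σ i.succ - σ i.castSucc) ≤ x₀ := le_max_right _ _
    have h3 : -(D i 0) ≤ (σ i.succ - σ i.castSucc) * x₀ := by
      rw [div_le_iff₀ (hδ i)] at h2; linarith
    simp only [Set.mem_setOf_eq]; linarith
  have hSbdd : ∀ i : Fin m, BddBelow {x : ℝ | 0 ≤ D i x} := by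
    intro i
    refine ⟨min 0 ((-(D i 0) - 1) / (σ i.succ - σ i.castSucc)), ?_⟩
    intro x hx
    by_contra hlt
    push_neg at hlt
    have hx0 : x ≤ 0 := hlt.le.trans (min_le_left _ _)
    have hx1 : x ≤ (-(D i 0) - 1) / (σ i.succ - σ i.castSucc) := hlt.le.trans (min_le_right _ _)
    have h3 : (σ i.succ - σ i.castSucc) * x ≤ -(D i 0) - 1 := by
      rw [le_div_iff₀ (hδ i)] at hx1; linarith
    have h1 := hDmono i hx0
    have : D i x ≤ -1 := by nlinarith [hδ i]
    have hx' : (0:ℝ) ≤ D i x := hx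
    linarith
  set t : Fin m → ℝ := fun i => sInf {x : ℝ | 0 ≤ D i x} with ht
  have hDt0 : ∀ i : Fin m, D i (t i) = 0 := by
    intro i
    have hcl : IsClosed {x : ℝ | 0 ≤ D i x} := isClosed_le continuous_const (hDcont i)
    have hmem : t i ∈ {x : ℝ | 0 ≤ D i x} := hcl.csInf_mem (hSne i) (hSbdd i)
    have hge : 0 ≤ D i (t i) := hmem
    by_contra hne
    have hpos : 0 < D i (t i) := lt_of_le_of_ne hge (Ne.symm hne)
    have hopen : IsOpen {x : ℝ | 0 < D i x} := isOpen_lt continuous_const (hDcont i)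
    obtain ⟨ε, hε, hball⟩ := Metric.isOpen_iff.1 hopen (t i) hpos
    have hin : t i - ε/2 ∈ Metric.ball (t i) ε := by
      rw [Metric.mem_ball, Real.dist_eq, abs_of_nonpos (by linarith)]
      linarith
    have hin2 : (0:ℝ) < D i (t i - ε/2) := hball hin
    have : t i ≤ t i - ε/2 :=
      csInf_le (hSbdd i) (show t i - ε/2 ∈ {x : ℝ | 0 ≤ D i x} from le_of_lt hin2)
    linarith
  have hDle : ∀ (i : Fin m) {x : ℝ}, x ≤ t i → D i x ≤ 0 := by
    intro i x hx
    have := hDmono i hx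
    have h2 := hDt0 i
    nlinarith [hδ i, mul_nonneg (le_of_lt (hδ i)) (by linarith : (0:ℝ) ≤ t i - x)]
  have hDge : ∀ (i : Fin m) {x : ℝ}, t i ≤ x → 0 ≤ D i x := by
    intro i x hx
    have := hDmono i hx
    have h2 := hDt0 i
    nlinarith [mul_nonneg (le_of_lt (hδ i)) (by linarith : (0:ℝ) ≤ x - t i)]
  have htmono : Monotone t := by
    intro i i' hii'
    apply csInf_le_csInf (hSbdd i) (hSne i')
    intro x hx
    have hsubU : Finset.Iic i.castSucc ⊆ Finset.Iic i'.castSucc := by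
      intro j hj
      simp only [Finset.mem_Iic] at *
      exact hj.trans (Fin.castSucc_le_castSucc_iff.2 hii')
    have hsubV : Finset.Ioi i'.castSucc ⊆ Finset.Ioi i.castSucc := by
      intro j hj
      simp only [Finset.mem_Ioi] at *
      exact lt_of_le_of_lt (Fin.castSucc_le_castSucc_iff.2 hii') hj
    have h1 : EU i x ≤ EU i' x := Finset.sup'_le _ _
      (fun j hj => Finset.le_sup' (fun j => σ j * x + β j) (hsubU hj))
    have h2 : EV i' x ≤ EV i x := Finset.sup'_le _ _
      (fun j hj => Finset.le_sup' (fun j => σ j * x + β j) (hsubV hj))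
    have hx' : (0:ℝ) ≤ D i' x := hx
    simp only [Set.mem_setOf_eq, hD] at *
    linarith
  -- (A) and (B)
  have hA : ∀ (j : Fin (m+1)) (y : ℝ), (∀ i : Fin m, (i:ℕ) < (j:ℕ) → t i ≤ y) →
      ∃ j' : Fin (m+1), (j:ℕ) ≤ (j':ℕ) ∧ E y = σ j' * y + β j' := by
    intro j y hy
    by_cases hj : (j : ℕ) = 0
    · obtain ⟨j', _, hj'⟩ := Finset.exists_mem_eq_sup' (Finset.univ_nonempty) (fun i : Fin (m+1) => σ i * y + β i)
      exact ⟨j', by omega, hj'⟩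
    · have hjm : (j:ℕ) - 1 < m := by omega
      set i : Fin m := ⟨(j:ℕ) - 1, hjm⟩ with hi
      have hti : t i ≤ y := hy i (by show (j:ℕ) - 1 < (j:ℕ); omega)
      have hge := hDge i hti
      have hmax : E y = EV i y := by
        rw [hsplit i y]
        simp only [hD] at hge
        exact max_eq_right (by linarith)
      obtain ⟨j', hj'mem, hj'⟩ := Finset.exists_mem_eq_sup' (hVne i) (fun jj : Fin (m+1) => σ jj * y + β jj)
      refine ⟨j', ?_, by rw [hmax]; exact hj'⟩
      have := Finset.mem_Ioi.1 hj'mem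
      have h2 : (i.castSucc : ℕ) < (j' : ℕ) := this
      simp only [Fin.coe_castSucc, hi] at h2
      omega
  have hB : ∀ (j : Fin (m+1)) (y : ℝ), (∀ i : Fin m, (j:ℕ) ≤ (i:ℕ) → y ≤ t i) →
      ∃ j'' : Fin (m+1), (j'':ℕ) ≤ (j:ℕ) ∧ E y = σ j'' * y + β j'' := by
    intro j y hy
    by_cases hj : (j : ℕ) = m
    · obtain ⟨j'', _, hj''⟩ := Finset.exists_mem_eq_sup' (Finset.univ_nonempty) (fun i : Fin (m+1) => σ i * y + β i)
      exact ⟨j'', by omega, hj''⟩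
    · have hjm : (j:ℕ) < m := by have := j.isLt; omega
      set i : Fin m := ⟨(j:ℕ), hjm⟩ with hi
      have hti : y ≤ t i := hy i (by simp [hi])
      have hle := hDle i hti
      have hmax : E y = EU i y := by
        rw [hsplit i y]
        simp only [hD] at hle
        exact max_eq_left (by linarith)
      obtain ⟨j'', hj''mem, hj''⟩ := Finset.exists_mem_eq_sup' (hUne i) (fun jj : Fin (m+1) => σ jj * y + β jj)
      refine ⟨j'', ?_, by rw [hmax]; exact hj''⟩
      have := Finset.mem_Iic.1 hj''mem
      have h2 : (j'' : ℕ) ≤ (i.castSucc : ℕ) := this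
      simpa [hi] using h2
  -- affine on pieces
  refine ⟨Nat.succ_pos m, t, htmono, ?_⟩
  intro j
  have key : ∀ x y : ℝ, x ≤ y →
      (∀ i : Fin m, (i:ℕ) < (j:ℕ) → t i ≤ x) → (∀ i : Fin m, (j:ℕ) ≤ (i:ℕ) → x ≤ t i) →
      (∀ i : Fin m, (i:ℕ) < (j:ℕ) → t i ≤ y) → (∀ i : Fin m, (j:ℕ) ≤ (i:ℕ) → y ≤ t i) →
      E y = E x + σ j * (y - x) := by
    intro x y hxy hx1 hx2 hy1 hy2
    obtain ⟨j'', hj''le, hj''⟩ := hB j y hy2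
    obtain ⟨j', hj'ge, hj'⟩ := hA j x hx1
    have hub : E y ≤ E x + σ j * (y - x) := by
      have h1 : σ j'' * x + β j'' ≤ E x := Finset.le_sup' (fun i => σ i * x + β i) (Finset.mem_univ j'')
      have h2 : σ j'' ≤ σ j := hσ.monotone (Fin.le_def.mpr hj''le)
      nlinarith [hj'']
    have hlb : E x + σ j * (y - x) ≤ E y := by
      have h1 : σ j' * y + β j' ≤ E y := Finset.le_sup' (fun i => σ i * y + β i) (Finset.mem_univ j')
      have h2 : σ j ≤ σ j' := hσ.monotone (Fin.le_def.mpr hj'ge)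
      nlinarith [hj']
    linarith
  by_cases hP : ∃ y₀ : ℝ, (∀ i : Fin m, (i:ℕ) < (j:ℕ) → t i ≤ y₀) ∧ (∀ i : Fin m, (j:ℕ) ≤ (i:ℕ) → y₀ ≤ t i)
  · obtain ⟨y₀, hy₀1, hy₀2⟩ := hP
    refine ⟨σ j, E y₀ - σ j * y₀, ?_⟩
    intro y h1 h2
    rcases le_total y y₀ with h | h
    · have := key y y₀ h h1 h2 hy₀1 hy₀2
      linarith
    · have := key y₀ y h hy₀1 hy₀2 h1 h2
      linarith
  · refine ⟨0, 0, ?_⟩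
    intro y h1 h2
    exact (hP ⟨y, h1, h2⟩).elim
end envlaux

theorem envl {ι : Type*} (S : Finset ι) (hS : S.Nonempty) (A B : ι → ℝ) :
    PiecewiseAffineWith (fun x => S.sup' hS (fun i => A i * x + B i)) ((S.image A).card) := by
  classical
  obtain ⟨m, hm⟩ : ∃ m, (S.image A).card = m + 1 := by
    have : 0 < (S.image A).card := Finset.card_pos.2 (hS.image A)
    exact ⟨(S.image A).card - 1, by omega⟩
  set e := (S.image A).orderIsoOfFin hm with he
  set σ : Fin (m+1) → ℝ := fun i => (e i : ℝ) with hσdef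
  have hσ : StrictMono σ := fun i j hij => Subtype.coe_lt_coe.2 (e.strictMono hij)
  have hβne : ∀ i : Fin (m+1), ((S.filter (fun s => A s = σ i)).image B).Nonempty := by
    intro i
    have : σ i ∈ S.image A := (e i).2
    obtain ⟨s, hs, hAs⟩ := Finset.mem_image.1 this
    exact ⟨B s, Finset.mem_image.2 ⟨s, Finset.mem_filter.2 ⟨hs, hAs⟩, rfl⟩⟩
  set β : Fin (m+1) → ℝ := fun i => ((S.filter (fun s => A s = σ i)).image B).max' (hβne i) with hβdef
  have hfun : (fun x => S.sup' hS (fun i => A i * x + B i))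
      = (fun x => (Finset.univ : Finset (Fin (m+1))).sup' Finset.univ_nonempty (fun i => σ i * x + β i)) := by
    funext x
    apply le_antisymm
    · apply Finset.sup'_le
      intro s hs
      have hmem : A s ∈ S.image A := Finset.mem_image.2 ⟨s, hs, rfl⟩
      set i := e.symm ⟨A s, hmem⟩ with hi
      have hAi : σ i = A s := by
        simp only [hσdef, hi, OrderIso.apply_symm_apply]
      have hBi : B s ≤ β i := by
        apply Finset.le_max'
        exact Finset.mem_image.2 ⟨s, Finset.mem_filter.2 ⟨hs, hAi.symm⟩, rfl⟩
      calc A s * x + B s ≤ σ i * x + β i := by rw [hAi]; linarith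
        _ ≤ _ := Finset.le_sup' (fun i => σ i * x + β i) (Finset.mem_univ i)
    · apply Finset.sup'_le
      intro i _
      have hmax := Finset.max'_mem _ (hβne i)
      obtain ⟨s₀, hs₀mem, hBs₀⟩ := Finset.mem_image.1 hmax
      obtain ⟨hs₀S, hAs₀⟩ := Finset.mem_filter.1 hs₀mem
      have : σ i * x + β i = A s₀ * x + B s₀ := by rw [hAs₀, hBs₀]
      rw [this]
      exact Finset.le_sup' (fun s => A s * x + B s) hs₀S
  rw [hfun, hm]
  exact envl_aux σ β hσ

/-- Gluing: from local affineness off a finite set `Bk`, get piecewise affineness. -/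
lemma pw_of_finset (f : ℝ → ℝ) (Bk : Finset ℝ)
    (hloc : ∀ p q : ℝ, p < q → (∀ t ∈ Bk, t ∉ Set.Ioo p q) →
      ∃ a b : ℝ, ∀ y ∈ Set.Icc p q, f y = a * y + b) :
    PiecewiseAffineWith f (Bk.card + 1) := by
  classical
  set n := Bk.card with hn
  set e := Bk.orderIsoOfFin hn.symm with he
  set c : Fin n → ℝ := fun i => (e i : ℝ) with hc
  have hcmono : StrictMono c := fun i j hij => Subtype.coe_lt_coe.2 (e.strictMono hij)
  have hcmem : ∀ i, c i ∈ Bk := fun i => (e i).2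
  have hcsurj : ∀ t ∈ Bk, ∃ i, c i = t := by
    intro t ht
    refine ⟨e.symm ⟨t, ht⟩, ?_⟩
    have : e (e.symm ⟨t, ht⟩) = ⟨t, ht⟩ := e.apply_symm_apply _
    simp only [hc, this]
  -- extension lemma along rays
  have hray_left : ∀ q : ℝ, (∀ t ∈ Bk, ¬ t < q) → ∃ a b : ℝ, ∀ y ≤ q, f y = a * y + b := by
    intro q hq
    obtain ⟨a, b, hab⟩ := hloc (q-1) q (by linarith)
      (fun t ht hmem => (hq t ht) hmem.2)
    refine ⟨a, b, ?_⟩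
    intro y hy
    rcases le_or_gt (q-1) y with h | h
    · exact hab y ⟨h, hy⟩
    · obtain ⟨a', b', hab'⟩ := hloc y q (by linarith)
        (fun t ht hmem => (hq t ht) hmem.2)
      have hagree : ∀ z ∈ Set.Icc (q-1) q, a'*z+b' = a*z+b := by
        intro z hz
        rw [← hab z hz, ← hab' z ⟨by linarith [hz.1], hz.2⟩]
      obtain ⟨ha, hb⟩ := affine_eq_coeff' (by linarith : q-1 < q) hagree
      rw [hab' y ⟨le_refl y, by linarith⟩, ha, hb]
  have hray_right : ∀ p : ℝ, (∀ t ∈ Bk, ¬ p < t) → ∃ a b : ℝ, ∀ y, p ≤ y → f y = a * y + b := by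
    intro p hp
    obtain ⟨a, b, hab⟩ := hloc p (p+1) (by linarith)
      (fun t ht hmem => (hp t ht) hmem.1)
    refine ⟨a, b, ?_⟩
    intro y hy
    rcases le_or_gt y (p+1) with h | h
    · exact hab y ⟨hy, h⟩
    · obtain ⟨a', b', hab'⟩ := hloc p y (by linarith)
        (fun t ht hmem => (hp t ht) hmem.1)
      have hagree : ∀ z ∈ Set.Icc p (p+1), a'*z+b' = a*z+b := by
        intro z hz
        rw [← hab z hz, ← hab' z ⟨hz.1, by linarith [hz.2]⟩]
      obtain ⟨ha, hb⟩ := affine_eq_coeff' (by linarith : p < p+1) hagree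
      rw [hab' y ⟨by linarith, le_refl y⟩, ha, hb]
  refine ⟨Nat.succ_pos n, c, hcmono.monotone, ?_⟩
  intro j
  by_cases hj0 : (j : ℕ) = 0
  · -- leftmost piece
    by_cases hn0 : n = 0
    · -- no breakpoints at all: f affine on ℝ
      obtain ⟨a, b, hab⟩ := hray_left 0 (fun t ht => by
        exact absurd (Finset.card_pos.2 ⟨t, ht⟩).ne' (by omega))
      obtain ⟨a', b', hab'⟩ := hray_right (-1) (fun t ht => by
        exact absurd (Finset.card_pos.2 ⟨t, ht⟩).ne' (by omega))
      refine ⟨a, b, ?_⟩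
      intro y _ _
      rcases le_or_gt y 0 with h | h
      · exact hab y h
      · have hagree : ∀ z ∈ Set.Icc (-1:ℝ) 0, a'*z+b' = a*z+b := by
          intro z hz
          rw [← hab z hz.2, ← hab' z (by linarith [hz.1])]
        obtain ⟨ha, hb⟩ := affine_eq_coeff' (by norm_num : (-1:ℝ) < 0) hagree
        rw [hab' y (by linarith), ha, hb]
    · -- pieces bounded above by c 0
      have h0n : 0 < n := by omega
      set i0 : Fin n := ⟨0, h0n⟩ with hi0
      obtain ⟨a, b, hab⟩ := hray_left (c i0) (by
        intro t ht hlt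
        obtain ⟨i, hi⟩ := hcsurj t ht
        rw [← hi] at hlt
        exact absurd (hcmono.lt_iff_lt.1 hlt) (by simp [hi0, Fin.lt_def]))
      refine ⟨a, b, ?_⟩
      intro y _ h2
      exact hab y (h2 i0 (by omega))
  · by_cases hjn : (j : ℕ) = n
    · -- rightmost piece; n > 0 here since j = n ≠ 0
      have h0n : 0 < n := by omega
      set ilast : Fin n := ⟨n-1, by omega⟩ with hilast
      obtain ⟨a, b, hab⟩ := hray_right (c ilast) (by
        intro t ht hlt
        obtain ⟨i, hi⟩ := hcsurj t ht
        rw [← hi] at hlt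
        have := hcmono.lt_iff_lt.1 hlt
        rw [Fin.lt_def] at this
        simp only [hilast] at this
        omega)
      refine ⟨a, b, ?_⟩
      intro y h1 _
      exact hab y (h1 ilast (by simp [hilast]; omega))
    · -- middle piece between c (j-1) and c j
      have hj1 : (j:ℕ) - 1 < n := by have := j.isLt; omega
      have hj2 : (j:ℕ) < n := by have := j.isLt; omega
      set il : Fin n := ⟨(j:ℕ)-1, hj1⟩ with hil
      set ir : Fin n := ⟨(j:ℕ), hj2⟩ with hir
      have hlr : c il < c ir := hcmono (Fin.lt_def.2 (by show (j:ℕ) - 1 < (j:ℕ); omega))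
      obtain ⟨a, b, hab⟩ := hloc (c il) (c ir) hlr (by
        intro t ht hmem
        obtain ⟨i, hi⟩ := hcsurj t ht
        rw [← hi] at hmem
        have hl := hcmono.lt_iff_lt.1 hmem.1
        have hr := hcmono.lt_iff_lt.1 hmem.2
        rw [Fin.lt_def] at hl hr
        simp only [hil, hir] at hl hr
        omega)
      refine ⟨a, b, ?_⟩
      intro y h1 h2
      exact hab y ⟨h1 il (by show (j:ℕ) - 1 < (j:ℕ); omega), h2 ir (by simp [hir])⟩

/-- From a piecewise-affine representation extract breakpoints and a finite set of lines. -/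
lemma rep_lines (f : ℝ → ℝ) (k : ℕ) (hf : PiecewiseAffineWith f k) :
    ∃ (c : Fin (k-1) → ℝ) (L : Finset (ℝ × ℝ)), L.card ≤ k ∧
      ∀ p q : ℝ, p < q → (∀ i : Fin (k-1), c i ∉ Set.Ioo p q) →
        ∃ ab ∈ L, ∀ y ∈ Set.Icc p q, f y = ab.1 * y + ab.2 := by
  classical
  obtain ⟨hk, c, hmono, hpieces⟩ := hf
  set lineOf : Fin k → ℝ × ℝ :=
    fun j => ((hpieces j).choose, (hpieces j).choose_spec.choose) with hlineOf
  have hline : ∀ (j : Fin k) (y : ℝ),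
      (∀ i : Fin (k-1), (i:ℕ) < (j:ℕ) → c i ≤ y) →
      (∀ i : Fin (k-1), (j:ℕ) ≤ (i:ℕ) → y ≤ c i) →
      f y = (lineOf j).1 * y + (lineOf j).2 :=
    fun j y h1 h2 => (hpieces j).choose_spec.choose_spec y h1 h2
  refine ⟨c, Finset.univ.image lineOf, ?_, ?_⟩
  · calc (Finset.univ.image lineOf).card ≤ Finset.univ.card := Finset.card_image_le
      _ = k := by simp
  · intro p q hpq havoid
    by_cases hS : (Finset.univ.filter (fun i : Fin (k-1) => c i ≤ p)).Nonempty
    · set mm := (Finset.univ.filter (fun i : Fin (k-1) => c i ≤ p)).max' hS with hmm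
      have hmmP : c mm ≤ p := (Finset.mem_filter.1 ((Finset.univ.filter _).max'_mem hS)).2
      have hjlt : (mm:ℕ) + 1 < k := by have := mm.isLt; omega
      set j : Fin k := ⟨(mm:ℕ)+1, hjlt⟩ with hj
      refine ⟨lineOf j, Finset.mem_image.2 ⟨j, Finset.mem_univ j, rfl⟩, ?_⟩
      intro y hy
      apply hline j y
      · intro i hi
        have hile : i ≤ mm := by
          rw [Fin.le_def]; simp only [hj] at hi; omega
        calc c i ≤ c mm := hmono hile
          _ ≤ p := hmmP
          _ ≤ y := hy.1
      · intro i hi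
        have hnot : ¬ c i ≤ p := by
          intro hle
          have : i ≤ mm := Finset.le_max' _ i (Finset.mem_filter.2 ⟨Finset.mem_univ i, hle⟩)
          rw [Fin.le_def] at this
          simp only [hj] at hi
          omega
        push_neg at hnot
        have : q ≤ c i := by
          by_contra hq
          push_neg at hq
          exact havoid i ⟨hnot, hq⟩
        linarith [hy.2]
    · rw [Finset.not_nonempty_iff_eq_empty, Finset.filter_eq_empty_iff] at hS
      set j : Fin k := ⟨0, hk⟩ with hj
      refine ⟨lineOf j, Finset.mem_image.2 ⟨j, Finset.mem_univ j, rfl⟩, ?_⟩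
      intro y hy
      apply hline j y
      · intro i hi
        simp only [hj] at hi
        omega
      · intro i _
        have hnot : ¬ c i ≤ p := hS (Finset.mem_univ i)
        push_neg at hnot
        have : q ≤ c i := by
          by_contra hq
          push_neg at hq
          exact havoid i ⟨hnot, hq⟩
        linarith [hy.2]

lemma pw_neg {f : ℝ → ℝ} {k : ℕ} (hf : PiecewiseAffineWith f k) :
    PiecewiseAffineWith (fun x => - f x) k := by
  obtain ⟨hk, c, hmono, hpieces⟩ := hf
  refine ⟨hk, c, hmono, ?_⟩
  intro j
  obtain ⟨a, b, hab⟩ := hpieces j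
  refine ⟨-a, -b, fun y h1 h2 => ?_⟩
  show - f y = -a * y + -b
  rw [hab y h1 h2]; ring

lemma pw_comp_neg {f : ℝ → ℝ} {k : ℕ} (hf : PiecewiseAffineWith f k) :
    PiecewiseAffineWith (fun x => f (-x)) k := by
  obtain ⟨hk, c, hmono, hpieces⟩ := hf
  refine ⟨hk, fun i => - c i.rev, ?_, ?_⟩
  · intro i i' hii'
    simp only [neg_le_neg_iff]
    exact hmono (Fin.rev_le_rev.2 hii')
  · intro j
    obtain ⟨a, b, hab⟩ := hpieces j.rev
    refine ⟨-a, b, ?_⟩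
    intro y h1 h2
    have key : f (-y) = a * (-y) + b := by
      apply hab
      · intro i hi
        have hik := i.isLt
        have hjk := j.isLt
        have hrev : (j.rev : ℕ) = k - 1 - (j:ℕ) := by
          simp [Fin.val_rev]; omega
        have hirev : (i.rev : ℕ) = k - 2 - (i:ℕ) := by
          simp [Fin.val_rev]; omega
        have hcond : (j:ℕ) ≤ (i.rev : ℕ) := by rw [hirev]; rw [hrev] at hi; omega
        have h2' : y ≤ - c i.rev.rev := h2 i.rev hcond
        rw [Fin.rev_rev] at h2'
        linarith
      · intro i hi
        have hik := i.isLt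
        have hjk := j.isLt
        have hrev : (j.rev : ℕ) = k - 1 - (j:ℕ) := by
          simp [Fin.val_rev]; omega
        have hirev : (i.rev : ℕ) = k - 2 - (i:ℕ) := by
          simp [Fin.val_rev]; omega
        have hcond : (i.rev : ℕ) < (j:ℕ) := by rw [hirev]; rw [hrev] at hi; omega
        have h1' : - c i.rev.rev ≤ y := h1 i.rev hcond
        rw [Fin.rev_rev] at h1'
        linarith
    show f (-y) = -a * y + b
    rw [key]; ring

/-- On every nondegenerate interval the max of two lines dominates one of them on a
nondegenerate subinterval. -/
lemma max_affine_piece (a₁ b₁ a₂ b₂ r s : ℝ) (hrs : r < s) :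
    ∃ r' s', r ≤ r' ∧ s' ≤ s ∧ r' < s' ∧
      ((∀ y ∈ Set.Icc r' s', a₂*y+b₂ ≤ a₁*y+b₁) ∨
       (∀ y ∈ Set.Icc r' s', a₁*y+b₁ ≤ a₂*y+b₂)) := by
  rcases le_or_gt (a₂*r+b₂) (a₁*r+b₁) with h1 | h1 <;>
    rcases le_or_gt (a₂*s+b₂) (a₁*s+b₁) with h2 | h2
  · -- both ≥ 0 : line 1 dominates on [r,s]
    refine ⟨r, s, le_refl r, le_refl s, hrs, Or.inl ?_⟩
    intro y hy
    nlinarith [mul_nonneg (sub_nonneg.2 hy.1) (sub_nonneg.2 h2),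
      mul_nonneg (sub_nonneg.2 hy.2) (sub_nonneg.2 h1)]
  · -- d r ≥ 0 > d s : slope a₁ - a₂ < 0 ; crossing w, use [r,w] if r<w else [w,s]
    have hslope : a₁ - a₂ < 0 := by nlinarith
    set w := (b₂ - b₁)/(a₁ - a₂) with hw
    have hdw : (a₁ - a₂) * w = b₂ - b₁ := by
      rw [hw, mul_div_cancel₀ _ (by intro hc; rw [hc] at hslope; simp at hslope : a₁ - a₂ ≠ 0)]
    have hrw : r ≤ w := by
      by_contra hc
      push_neg at hc
      nlinarith [mul_pos_of_neg_of_neg hslope (sub_neg.2 hc)]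
    have hws : w < s := by
      by_contra hc
      push_neg at hc
      nlinarith [mul_nonneg (neg_nonneg.2 hslope.le) (sub_nonneg.2 hc)]
    rcases eq_or_lt_of_le hrw with heq | hlt
    · refine ⟨w, s, le_of_eq heq, le_refl s, hws, Or.inr ?_⟩
      intro y hy
      nlinarith [mul_nonpos_of_nonpos_of_nonneg hslope.le (sub_nonneg.2 hy.1)]
    · refine ⟨r, w, le_refl r, hws.le, hlt, Or.inl ?_⟩
      intro y hy
      nlinarith [mul_nonneg (neg_nonneg.2 hslope.le) (sub_nonneg.2 hy.2)]
  · -- d r < 0 ≤ d s : slope > 0 ; crossing w, d ≤ 0 on [r,w]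
    have hslope : 0 < a₁ - a₂ := by nlinarith
    set w := (b₂ - b₁)/(a₁ - a₂) with hw
    have hdw : (a₁ - a₂) * w = b₂ - b₁ := by
      rw [hw, mul_div_cancel₀ _ (by intro hc; rw [hc] at hslope; simp at hslope : a₁ - a₂ ≠ 0)]
    have hrw : r < w := by
      by_contra hc
      push_neg at hc
      nlinarith [mul_nonneg hslope.le (sub_nonneg.2 hc)]
    have hws : w ≤ s := by
      by_contra hc
      push_neg at hc
      nlinarith [mul_pos hslope (sub_pos.2 hc)]
    refine ⟨r, w, le_refl r, hws, hrw, Or.inr ?_⟩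
    intro y hy
    nlinarith [mul_nonneg hslope.le (sub_nonneg.2 hy.2)]
  · refine ⟨r, s, le_refl r, le_refl s, hrs, Or.inr ?_⟩
    intro y hy
    nlinarith [mul_nonneg (sub_nonneg.2 hy.1) (sub_nonneg.2 h2.le),
      mul_nonneg (sub_nonneg.2 hy.2) (sub_nonneg.2 h1.le)]

/-- A convex function that agrees with a line on a nondegenerate interval dominates it. -/
lemma line_le_of_convex {h : ℝ → ℝ} (hc : ConvexOn ℝ Set.univ h) {a b p q : ℝ} (hpq : p < q)
    (heq : ∀ y ∈ Set.Icc p q, h y = a*y+b) : ∀ x, a*x+b ≤ h x := by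
  intro x
  rcases lt_trichotomy x p with hx | hx | hx
  · have hslope := hc.slope_mono_adjacent (Set.mem_univ x) (Set.mem_univ q) hx (by linarith : p < q)
    rw [heq p ⟨le_refl p, hpq.le⟩, heq q ⟨hpq.le, le_refl q⟩] at hslope
    have h1 : 0 < p - x := by linarith
    have h2 : 0 < q - p := by linarith
    rw [div_le_div_iff₀ h1 h2] at hslope
    nlinarith [hslope]
  · rw [hx, heq p ⟨le_refl p, hpq.le⟩]
  · rcases le_or_gt x q with hxq | hxq
    · rw [heq x ⟨hx.le, hxq⟩]
    · have hslope := hc.slope_mono_adjacent (Set.mem_univ p) (Set.mem_univ x) hpq hxq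
      rw [heq p ⟨le_refl p, hpq.le⟩, heq q ⟨hpq.le, le_refl q⟩] at hslope
      have h1 : 0 < q - p := by linarith
      have h2 : 0 < x - q := by linarith
      rw [div_le_div_iff₀ h1 h2] at hslope
      nlinarith [hslope]

/-- Around every point there is a nondegenerate interval ending at it on which `f` is one of
finitely many lines. -/
lemma exists_line_at (f : ℝ → ℝ) (k : ℕ) (hf : PiecewiseAffineWith f k) :
    ∃ L : Finset (ℝ × ℝ), L.card ≤ k ∧
      ∀ x : ℝ, ∃ ab ∈ L, ∃ p, p < x ∧ ∀ y ∈ Set.Icc p x, f y = ab.1*y + ab.2 := by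
  classical
  obtain ⟨c, L, hcard, hloc⟩ := rep_lines f k hf
  refine ⟨L, hcard, ?_⟩
  intro x
  set V := (Finset.univ.image c).filter (fun t => t < x) with hV
  by_cases hVne : V.Nonempty
  · set p := V.max' hVne with hp
    have hpx : p < x := (Finset.mem_filter.1 (V.max'_mem hVne)).2
    obtain ⟨ab, hab, habs⟩ := hloc p x hpx (by
      intro i hmem
      have : c i ∈ V := Finset.mem_filter.2 ⟨Finset.mem_image.2 ⟨i, Finset.mem_univ i, rfl⟩, hmem.2⟩
      exact absurd (Finset.le_max' V _ this) (not_le.2 hmem.1))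
    exact ⟨ab, hab, p, hpx, habs⟩
  · obtain ⟨ab, hab, habs⟩ := hloc (x-1) x (by linarith) (by
      intro i hmem
      exact hVne ⟨c i, Finset.mem_filter.2 ⟨Finset.mem_image.2 ⟨i, Finset.mem_univ i, rfl⟩, hmem.2⟩⟩)
    exact ⟨ab, hab, x-1, by linarith, habs⟩

set_option maxHeartbeats 1000000 in
lemma pw_comp (φ v : ℝ → ℝ) (k m : ℕ) (hφ : PiecewiseAffineWith φ k) (hv : PiecewiseAffineWith v m)
    (hcv : ConvexOn ℝ Set.univ v) :
    ∃ K, K ≤ 2*k + m ∧ PiecewiseAffineWith (fun x => φ (v x)) K := by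
  classical
  obtain ⟨cφ, Lφ, hLφcard, hφloc⟩ := rep_lines φ k hφ
  obtain ⟨cv, Lv, hLvcard, hvloc⟩ := rep_lines v m hv
  set B : Finset ℝ := (Finset.univ.image cv) ∪
      ((Finset.univ.image (fun i : Fin (k-1) => sInf {x : ℝ | v x ≤ cφ i})) ∪
       (Finset.univ.image (fun i : Fin (k-1) => sSup {x : ℝ | v x ≤ cφ i}))) with hB
  have hk1 : 0 < k := hφ.1
  have hm1 : 0 < m := hv.1
  have hcard : B.card + 1 ≤ 2*k + m := by
    have h1 : B.card ≤ (m-1) + ((k-1) + (k-1)) := by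
      calc B.card ≤ (Finset.univ.image cv).card +
          ((Finset.univ.image (fun i : Fin (k-1) => sInf {x : ℝ | v x ≤ cφ i})).card +
           (Finset.univ.image (fun i : Fin (k-1) => sSup {x : ℝ | v x ≤ cφ i})).card) := by
            refine (Finset.card_union_le _ _).trans ?_
            exact add_le_add le_rfl (Finset.card_union_le _ _)
        _ ≤ (m-1) + ((k-1) + (k-1)) := by
            refine add_le_add (Finset.card_image_le.trans (by simp)) ?_
            exact add_le_add (Finset.card_image_le.trans (by simp)) (Finset.card_image_le.trans (by simp))
    omega
  refine ⟨B.card + 1, hcard, ?_⟩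
  apply pw_of_finset
  intro p q hpq havoid
  obtain ⟨ab, habLv, habv⟩ := hvloc p q hpq (by
    intro i hmem
    exact havoid (cv i) (by simp [hB]) hmem)
  obtain ⟨a, b⟩ := ab
  by_cases ha : a = 0
  · refine ⟨0, φ b, ?_⟩
    intro y hy
    rw [habv y hy, ha]
    norm_num
  rcases lt_or_gt_of_ne ha with hneg | hpos
  · -- a < 0
    have hlohi : a*q+b < a*p+b := by nlinarith
    have havoidφ : ∀ i : Fin (k-1), cφ i ∉ Set.Ioo (a*q+b) (a*p+b) := by
      intro i hmem
      obtain ⟨hm1', hm2'⟩ := hmem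
      set t := cφ i with htdef
      set x₀ := (t - b)/a with hx₀
      have hvx₀list : a * x₀ + b = t := by rw [hx₀]; field_simp; ring
      have hx₀1 : p < x₀ := by rw [hx₀, lt_div_iff_of_neg hneg]; linarith
      have hx₀2 : x₀ < q := by rw [hx₀, div_lt_iff_of_neg hneg]; linarith
      have hvx₀ : v x₀ = t := by
        rw [habv x₀ ⟨hx₀1.le, hx₀2.le⟩]; exact hvx₀list
      have hleast : IsLeast {x : ℝ | v x ≤ t} x₀ := by
        constructor
        · exact le_of_eq hvx₀
        · intro x hx
          by_contra hlt
          push_neg at hlt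
          have hx' : v x ≤ t := hx
          have hvt : t < v x := by
            rcases le_or_gt p x with hxp | hxp
            · have hxq : x ≤ q := by linarith
              rw [habv x ⟨hxp, hxq⟩]
              nlinarith
            · have hslope := hcv.slope_mono_adjacent (Set.mem_univ x) (Set.mem_univ x₀)
                hxp hx₀1
              rw [habv p ⟨le_refl p, hpq.le⟩, hvx₀] at hslope
              have hppos : 0 < p - x := by linarith
              have hqpos : 0 < x₀ - p := by linarith
              rw [div_le_div_iff₀ hppos hqpos] at hslope
              have hvp : t - (a*p+b) = a * (x₀ - p) := by
                rw [← hvx₀list]; ring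
              have key1 : a*p+b - v x ≤ a * (p - x) := by nlinarith [hslope, hvp, hqpos]
              nlinarith [mul_pos (neg_pos.2 hneg) (sub_pos.2 hlt)]
          linarith
      have hx₀B : x₀ ∈ B := by
        rw [hB]
        apply Finset.mem_union_right
        apply Finset.mem_union_left
        refine Finset.mem_image.2 ⟨i, Finset.mem_univ i, ?_⟩
        rw [hleast.csInf_eq]
      exact havoid x₀ hx₀B ⟨hx₀1, hx₀2⟩
    obtain ⟨αγ, hαγL, hαγ⟩ := hφloc (a*q+b) (a*p+b) hlohi havoidφ
    refine ⟨αγ.1 * a, αγ.1 * b + αγ.2, ?_⟩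
    intro y hy
    have hyin : a * y + b ∈ Set.Icc (a*q+b) (a*p+b) :=
      ⟨by nlinarith [hy.2], by nlinarith [hy.1]⟩
    rw [habv y hy, hαγ (a*y+b) hyin]
    ring
  · -- a > 0
    have hlohi : a*p+b < a*q+b := by nlinarith
    have havoidφ : ∀ i : Fin (k-1), cφ i ∉ Set.Ioo (a*p+b) (a*q+b) := by
      intro i hmem
      obtain ⟨hm1', hm2'⟩ := hmem
      set t := cφ i with htdef
      set x₀ := (t - b)/a with hx₀
      have hvx₀list : a * x₀ + b = t := by rw [hx₀]; field_simp; ring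
      have hx₀1 : p < x₀ := by rw [hx₀, lt_div_iff₀ hpos]; linarith
      have hx₀2 : x₀ < q := by rw [hx₀, div_lt_iff₀ hpos]; linarith
      have hvx₀ : v x₀ = t := by
        rw [habv x₀ ⟨hx₀1.le, hx₀2.le⟩]; exact hvx₀list
      have hgreat : IsGreatest {x : ℝ | v x ≤ t} x₀ := by
        constructor
        · exact le_of_eq hvx₀
        · intro x hx
          by_contra hlt
          push_neg at hlt
          have hx' : v x ≤ t := hx
          have hvt : t < v x := by
            rcases le_or_gt x q with hxq | hxq
            · have hxp : p ≤ x := by linarith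
              rw [habv x ⟨hxp, hxq⟩]
              nlinarith
            · have hslope := hcv.slope_mono_adjacent (Set.mem_univ x₀) (Set.mem_univ x)
                hx₀2 hxq
              rw [habv q ⟨hpq.le, le_refl q⟩, hvx₀] at hslope
              have hqpos : 0 < q - x₀ := by linarith
              have hxpos : 0 < x - q := by linarith
              rw [div_le_div_iff₀ hqpos hxpos] at hslope
              have hvq : (a*q+b) - t = a * (q - x₀) := by
                rw [← hvx₀list]; ring
              have key1 : a * (x - q) ≤ v x - (a*q+b) := by nlinarith [hslope, hvq, hqpos]
              nlinarith [mul_pos hpos (sub_pos.2 hlt)]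
          linarith
      have hx₀B : x₀ ∈ B := by
        rw [hB]
        apply Finset.mem_union_right
        apply Finset.mem_union_right
        refine Finset.mem_image.2 ⟨i, Finset.mem_univ i, ?_⟩
        rw [hgreat.csSup_eq]
      exact havoid x₀ hx₀B ⟨hx₀1, hx₀2⟩
    obtain ⟨αγ, hαγL, hαγ⟩ := hφloc (a*p+b) (a*q+b) hlohi havoidφ
    refine ⟨αγ.1 * a, αγ.1 * b + αγ.2, ?_⟩
    intro y hy
    have hyin : a * y + b ∈ Set.Icc (a*p+b) (a*q+b) :=
      ⟨by nlinarith [hy.1], by nlinarith [hy.2]⟩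
    rw [habv y hy, hαγ (a*y+b) hyin]
    ring

end PWHelpers

open Finset Set in
/-- if `F`, `G` are nonempty finite sets of affine functions and
`H = {f ∘ g | f ∈ F, g ∈ G}`, then the upper envelope `H_↑` is piecewise
linear with `p(H_↑) ≤ 4 p(F_↑) + 2 p(G_↓) + 2 p(G_↑)`. -/
theorem nPieces_upper_envelope_comp (F G H : Finset (ℝ → ℝ))
    (hF : F.Nonempty) (hG : G.Nonempty) (hH : H.Nonempty)
    (hFAff : ∀ f ∈ F, ∃ a b : ℝ, ∀ x : ℝ, f x = a * x + b)
    (hGAff : ∀ g ∈ G, ∃ a b : ℝ, ∀ x : ℝ, g x = a * x + b)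
    (hHmem : ∀ h : ℝ → ℝ, h ∈ H ↔ ∃ f ∈ F, ∃ g ∈ G, h = f ∘ g) :
    (∃ k : ℕ, PiecewiseAffineWith (fun x : ℝ => H.sup' hH (fun h => h x)) k) ∧
    nPieces (fun x : ℝ => H.sup' hH (fun h => h x)) ≤
      4 * nPieces (fun x : ℝ => F.sup' hF (fun f => f x)) +
      2 * nPieces (fun x : ℝ => G.inf' hG (fun g => g x)) +
      2 * nPieces (fun x : ℝ => G.sup' hG (fun g => g x)) := by
  classical
  -- canonical slopes and intercepts of affine functions
  set aff : (ℝ → ℝ) → Prop := fun f => ∃ a b : ℝ, ∀ x : ℝ, f x = a * x + b with haffdef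
  set sl : (ℝ → ℝ) → ℝ := fun f => if h : aff f then h.choose else 0 with hsl'
  set ic : (ℝ → ℝ) → ℝ := fun f => if h : aff f then h.choose_spec.choose else 0 with hic'
  have hsl : ∀ f, aff f → ∀ x, f x = sl f * x + ic f := by
    intro f h x
    simp only [hsl', hic', dif_pos h]
    exact h.choose_spec.choose_spec x
  have haffH : ∀ h ∈ H, aff h := by
    intro h hh
    obtain ⟨f, hf, g, hg, rfl⟩ := (hHmem h).1 hh
    obtain ⟨a, b, hab⟩ := hFAff f hf
    obtain ⟨a', b', hab'⟩ := hGAff g hg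
    exact ⟨a * a', a * b' + b, fun x => by simp [Function.comp, hab, hab']; ring⟩
  -- the four envelope functions
  set φ : ℝ → ℝ := fun x => F.sup' hF (fun f => f x) with hφdef
  set u : ℝ → ℝ := fun x => G.sup' hG (fun g => g x) with hudef
  set l : ℝ → ℝ := fun x => G.inf' hG (fun g => g x) with hldef
  set hh : ℝ → ℝ := fun x => H.sup' hH (fun h => h x) with hhdef
  have hφeq : φ = fun x => F.sup' hF (fun f => sl f * x + ic f) := by
    funext x
    exact Finset.sup'_congr hF rfl (fun f hf => hsl f (hFAff f hf) x)
  have hueq : u = fun x => G.sup' hG (fun g => sl g * x + ic g) := by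
    funext x
    exact Finset.sup'_congr hG rfl (fun g hg => hsl g (hGAff g hg) x)
  have hheq : hh = fun x => H.sup' hH (fun h => sl h * x + ic h) := by
    funext x
    exact Finset.sup'_congr hH rfl (fun h h' => hsl h (haffH h h') x)
  set negl : ℝ → ℝ := fun x => G.sup' hG (fun g => (- sl g) * x + (- ic g)) with hnegldef
  have hlneg : l = fun x => - negl x := by
    funext x
    apply le_antisymm
    · rw [hnegldef]
      simp only [le_neg]
      apply Finset.sup'_le
      intro g hg
      have h1 : l x ≤ g x := Finset.inf'_le (fun g => g x) hg
      have h2 := hsl g (hGAff g hg) x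
      linarith
    · rw [hldef]
      apply Finset.le_inf'
      intro g hg
      have h1 : (- sl g) * x + (- ic g) ≤ negl x :=
        Finset.le_sup' (fun g => (- sl g) * x + (- ic g)) hg
      have h2 := hsl g (hGAff g hg) x
      simp only [neg_le]
      linarith [neg_le.1 (by linarith : -(g x) ≤ negl x)]
  -- piecewise affine structure for the basic envelopes
  have hφpw : ∃ k, PiecewiseAffineWith φ k := ⟨_, hφeq ▸ envl F hF sl ic⟩
  have hupw : ∃ k, PiecewiseAffineWith u k := ⟨_, hueq ▸ envl G hG sl ic⟩
  have hneglpw : PiecewiseAffineWith negl ((G.image (fun g => - sl g)).card) :=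
    hnegldef ▸ envl G hG (fun g => - sl g) (fun g => - ic g)
  have hlpw : ∃ k, PiecewiseAffineWith l k :=
    ⟨(G.image (fun g => - sl g)).card, by rw [hlneg]; exact pw_neg hneglpw⟩
  have hhpw : ∃ k, PiecewiseAffineWith hh k := ⟨_, hheq ▸ envl H hH sl ic⟩
  -- minimal representations
  set k₁ := nPieces φ with hk₁def
  set k₂ := nPieces l with hk₂def
  set k₃ := nPieces u with hk₃def
  have hk₁ : PiecewiseAffineWith φ k₁ := Nat.sInf_mem hφpw
  have hk₂ : PiecewiseAffineWith l k₂ := Nat.sInf_mem hlpw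
  have hk₃ : PiecewiseAffineWith u k₃ := Nat.sInf_mem hupw
  -- convexity
  have hucvx : ConvexOn ℝ Set.univ u := hueq ▸ lineSup_convex G hG sl ic
  have hneglcvx : ConvexOn ℝ Set.univ negl :=
    hnegldef ▸ lineSup_convex G hG (fun g => - sl g) (fun g => - ic g)
  have hhcvx : ConvexOn ℝ Set.univ hh := hheq ▸ lineSup_convex H hH sl ic
  -- the key pointwise identity
  have hid : ∀ x, hh x = max (φ (u x)) (φ (l x)) := by
    intro x
    apply le_antisymm
    · apply Finset.sup'_le
      intro h0 hh0
      obtain ⟨f, hf, g, hg, rfl⟩ := (hHmem h0).1 hh0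
      have hfa := hFAff f hf
      rcases le_or_gt 0 (sl f) with hs | hs
      · have h1 : g x ≤ u x := Finset.le_sup' (fun g => g x) hg
        have h2 : f (g x) ≤ f (u x) := by
          rw [hsl f hfa (g x), hsl f hfa (u x)]
          nlinarith
        have h3 : f (u x) ≤ φ (u x) := Finset.le_sup' (fun f' => f' (u x)) hf
        exact le_trans (h2.trans h3) (le_max_left _ _)
      · have h1 : l x ≤ g x := Finset.inf'_le (fun g => g x) hg
        have h2 : f (g x) ≤ f (l x) := by
          rw [hsl f hfa (g x), hsl f hfa (l x)]
          nlinarith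
        have h3 : f (l x) ≤ φ (l x) := Finset.le_sup' (fun f' => f' (l x)) hf
        exact le_trans (h2.trans h3) (le_max_right _ _)
    · apply max_le
      · apply Finset.sup'_le
        intro f hf
        have hfa := hFAff f hf
        rcases le_or_gt 0 (sl f) with hs | hs
        · obtain ⟨g₀, hg₀, hg₀eq⟩ := Finset.exists_mem_eq_sup' hG (fun g => g x)
          have heq2 : f (u x) = (f ∘ g₀) x := by
            rw [hudef]
            show f (G.sup' hG (fun g => g x)) = f (g₀ x)
            rw [← hg₀eq]
          rw [heq2]
          exact Finset.le_sup' (fun h' => h' x) ((hHmem (f ∘ g₀)).2 ⟨f, hf, g₀, hg₀, rfl⟩)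
        · obtain ⟨g₀, hg₀⟩ := hG
          have h1 : g₀ x ≤ u x := Finset.le_sup' (fun g => g x) hg₀
          have h2 : f (u x) ≤ f (g₀ x) := by
            rw [hsl f hfa (u x), hsl f hfa (g₀ x)]
            nlinarith
          have h3 : (f ∘ g₀) x ≤ hh x :=
            Finset.le_sup' (fun h' => h' x) ((hHmem (f ∘ g₀)).2 ⟨f, hf, g₀, hg₀, rfl⟩)
          exact h2.trans h3
      · apply Finset.sup'_le
        intro f hf
        have hfa := hFAff f hf
        rcases le_or_gt 0 (sl f) with hs | hs
        · obtain ⟨g₀, hg₀⟩ := hG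
          have h1 : l x ≤ g₀ x := Finset.inf'_le (fun g => g x) hg₀
          have h2 : f (l x) ≤ f (g₀ x) := by
            rw [hsl f hfa (l x), hsl f hfa (g₀ x)]
            nlinarith
          have h3 : (f ∘ g₀) x ≤ hh x :=
            Finset.le_sup' (fun h' => h' x) ((hHmem (f ∘ g₀)).2 ⟨f, hf, g₀, hg₀, rfl⟩)
          exact h2.trans h3
        · obtain ⟨g₀, hg₀, hg₀eq⟩ := Finset.exists_mem_eq_inf' hG (fun g => g x)
          have heq2 : f (l x) = (f ∘ g₀) x := by
            rw [hldef]
            show f (G.inf' hG (fun g => g x)) = f (g₀ x)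
            rw [← hg₀eq]
          rw [heq2]
          exact Finset.le_sup' (fun h' => h' x) ((hHmem (f ∘ g₀)).2 ⟨f, hf, g₀, hg₀, rfl⟩)
  -- compositions
  obtain ⟨K₁, hK₁le, hψ₁⟩ := pw_comp φ u k₁ k₃ hk₁ hk₃ hucvx
  have hmlneg : (fun x : ℝ => - l x) = negl := by
    rw [hlneg]
    funext x
    rw [neg_neg]
  have hneglpw' : PiecewiseAffineWith (fun x : ℝ => - l x) k₂ := pw_neg hk₂
  have hneglcvx' : ConvexOn ℝ Set.univ (fun x : ℝ => - l x) := hmlneg ▸ hneglcvx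
  obtain ⟨K₂, hK₂le, hψ₂'⟩ := pw_comp (fun y => φ (-y)) (fun x => - l x) k₁ k₂
    (pw_comp_neg hk₁) hneglpw' hneglcvx'
  have hψ₂ : PiecewiseAffineWith (fun x => φ (l x)) K₂ := by
    have : (fun x => (fun y => φ (-y)) ((fun x : ℝ => - l x) x)) = fun x => φ (l x) := by
      funext x; simp only [neg_neg]
    exact this ▸ hψ₂'
  -- lines attached to the three piecewise affine functions
  obtain ⟨L₁, hL₁card, hP₁⟩ := exists_line_at _ K₁ hψ₁
  obtain ⟨L₂, hL₂card, hP₂⟩ := exists_line_at _ K₂ hψ₂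
  obtain ⟨K₀, hK₀⟩ := hhpw
  obtain ⟨L₀, hL₀card, hP₀⟩ := exists_line_at hh K₀ hK₀
  -- the filtered line set
  set L' : Finset (ℝ × ℝ) := (L₁ ∪ L₂).filter (fun ab => ∀ x, ab.1 * x + ab.2 ≤ hh x) with hL'def
  have hcover : ∀ x, ∃ ab ∈ L', hh x = ab.1 * x + ab.2 := by
    intro x
    obtain ⟨ab₀, hab₀, p₀, hp₀, h₀⟩ := hP₀ x
    obtain ⟨ab₁, hab₁, p₁, hp₁, h₁⟩ := hP₁ x
    obtain ⟨ab₂, hab₂, p₂, hp₂, h₂⟩ := hP₂ x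
    set r := max p₀ (max p₁ p₂) with hr
    have hrx : r < x := by
      rw [hr]
      apply max_lt hp₀ (max_lt hp₁ hp₂)
    obtain ⟨r', s', hrr', hs'x, hr's', hcase⟩ := max_affine_piece ab₁.1 ab₁.2 ab₂.1 ab₂.2 r x hrx
    have hsub : ∀ y ∈ Set.Icc r' s', y ∈ Set.Icc r x :=
      fun y hy => ⟨hrr'.trans hy.1, hy.2.trans hs'x⟩
    have hy₀ : ∀ y ∈ Set.Icc r' s', hh y = ab₀.1 * y + ab₀.2 := by
      intro y hy
      have := hsub y hy
      exact h₀ y ⟨le_trans (le_max_left _ _) this.1, this.2⟩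
    rcases hcase with hc | hc
    · -- branch 1 dominates : hh = line ab₁ on [r', s']
      have hy₁ : ∀ y ∈ Set.Icc r' s', hh y = ab₁.1 * y + ab₁.2 := by
        intro y hy
        have hmem := hsub y hy
        have hy1 : y ∈ Set.Icc p₁ x := ⟨le_trans (le_trans (le_max_left _ _) (le_max_right p₀ _)) hmem.1, hmem.2⟩
        have hy2 : y ∈ Set.Icc p₂ x := ⟨le_trans (le_trans (le_max_right _ _) (le_max_right p₀ _)) hmem.1, hmem.2⟩
        have hle2 : φ (l y) ≤ φ (u y) := by
          rw [h₁ y hy1, h₂ y hy2]; exact hc y hy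
        rw [hid y, max_eq_left hle2]
        exact h₁ y hy1
      have hcoeff : ab₀.1 = ab₁.1 ∧ ab₀.2 = ab₁.2 := by
        apply affine_eq_coeff' hr's'
        intro y hy
        rw [← hy₀ y hy, ← hy₁ y hy]
      have hle : ∀ z, ab₁.1 * z + ab₁.2 ≤ hh z := line_le_of_convex hhcvx hr's' hy₁
      refine ⟨ab₁, Finset.mem_filter.2 ⟨Finset.mem_union_left _ hab₁, hle⟩, ?_⟩
      rw [h₀ x ⟨hp₀.le, le_refl x⟩, hcoeff.1, hcoeff.2]
    · have hy₂ : ∀ y ∈ Set.Icc r' s', hh y = ab₂.1 * y + ab₂.2 := by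
        intro y hy
        have hmem := hsub y hy
        have hy1 : y ∈ Set.Icc p₁ x := ⟨le_trans (le_trans (le_max_left _ _) (le_max_right p₀ _)) hmem.1, hmem.2⟩
        have hy2 : y ∈ Set.Icc p₂ x := ⟨le_trans (le_trans (le_max_right _ _) (le_max_right p₀ _)) hmem.1, hmem.2⟩
        have hle2 : φ (u y) ≤ φ (l y) := by
          rw [h₁ y hy1, h₂ y hy2]; exact hc y hy
        rw [hid y, max_eq_right hle2]
        exact h₂ y hy2
      have hcoeff : ab₀.1 = ab₂.1 ∧ ab₀.2 = ab₂.2 := by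
        apply affine_eq_coeff' hr's'
        intro y hy
        rw [← hy₀ y hy, ← hy₂ y hy]
      have hle : ∀ z, ab₂.1 * z + ab₂.2 ≤ hh z := line_le_of_convex hhcvx hr's' hy₂
      refine ⟨ab₂, Finset.mem_filter.2 ⟨Finset.mem_union_right _ hab₂, hle⟩, ?_⟩
      rw [h₀ x ⟨hp₀.le, le_refl x⟩, hcoeff.1, hcoeff.2]
  have hL'ne : L'.Nonempty := by
    obtain ⟨ab, hab, _⟩ := hcover 0
    exact ⟨ab, hab⟩
  have hfinal_eq : hh = fun x => L'.sup' hL'ne (fun ab => ab.1 * x + ab.2) := by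
    funext x
    apply le_antisymm
    · obtain ⟨ab, hab, heq⟩ := hcover x
      rw [heq]
      exact Finset.le_sup' (fun ab => ab.1 * x + ab.2) hab
    · apply Finset.sup'_le
      intro ab hab
      exact (Finset.mem_filter.1 hab).2 x
  have hfinalpw : PiecewiseAffineWith hh ((L'.image Prod.fst).card) := by
    rw [hfinal_eq]
    exact envl L' hL'ne Prod.fst Prod.snd
  have hcount : (L'.image Prod.fst).card ≤ 4 * k₁ + 2 * k₂ + 2 * k₃ := by
    calc (L'.image Prod.fst).card ≤ L'.card := Finset.card_image_le
      _ ≤ (L₁ ∪ L₂).card := Finset.card_filter_le _ _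
      _ ≤ L₁.card + L₂.card := Finset.card_union_le _ _
      _ ≤ K₁ + K₂ := add_le_add hL₁card hL₂card
      _ ≤ (2*k₁ + k₃) + (2*k₁ + k₂) := add_le_add hK₁le hK₂le
      _ ≤ 4 * k₁ + 2 * k₂ + 2 * k₃ := by omega
  exact ⟨⟨K₀, hK₀⟩, le_trans (Nat.sInf_le hfinalpw) hcount⟩
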